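/- The equicontinuous uniform Laplace principle implies the Freidlin-Wentzell uniform upper bound, with no extra assumptions: under the EULP over $\mathscr{A}$, for all $A\in\mathscr{A}$, $s_0>0$, $\delta>0$, $\limsup_{\epsilon\to 0}\sup_{x\in A}\sup_{s\in[0,s_0]}\big(a(\epsilon)\log\mathbb{P}(\mathrm{dist}(X^\epsilon_x,\Phi_x(s))\ge\delta)+s\big)\le 0$. -/

import Mathlib

open MeasureTheory Filter Topology
open scoped ENNReal NNReal BoundedContinuousFunction

section cutoff
variable {E : Type*} [MetricSpace E]

/-- The cutoff function `φ ↦ s * max (1 - dist(φ, C)/δ) 0`. -/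
noncomputable def fwCutoff (s δ : ℝ) (C : Set E) (hs : 0 ≤ s) (hδ : 0 < δ) : E →ᵇ ℝ :=
  BoundedContinuousFunction.ofNormedAddCommGroup
    (fun φ => s * max (1 - Metric.infDist φ C / δ) 0)
    (continuous_const.mul (((continuous_const.sub
      ((Metric.lipschitz_infDist_pt C).continuous.div_const δ)).max continuous_const)))
    s
    (by
      intro φ
      rw [Real.norm_eq_abs, abs_mul, abs_of_nonneg hs]
      have h1 : |max (1 - Metric.infDist φ C / δ) 0| ≤ 1 := by
        rw [abs_of_nonneg (le_max_right _ _)]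
        refine max_le ?_ zero_le_one
        have : 0 ≤ Metric.infDist φ C / δ :=
          div_nonneg Metric.infDist_nonneg hδ.le
        linarith
      nlinarith)

lemma fwCutoff_apply {s δ : ℝ} {C : Set E} {hs : 0 ≤ s} {hδ : 0 < δ} (φ : E) :
    fwCutoff s δ C hs hδ φ = s * max (1 - Metric.infDist φ C / δ) 0 := rfl

lemma fwCutoff_norm_le {s δ : ℝ} {C : Set E} {hs : 0 ≤ s} {hδ : 0 < δ} :
    ‖fwCutoff s δ C hs hδ‖ ≤ s :=
  BoundedContinuousFunction.norm_ofNormedAddCommGroup_le _ hs _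

lemma fwCutoff_nonneg {s δ : ℝ} {C : Set E} {hs : 0 ≤ s} {hδ : 0 < δ} (φ : E) :
    0 ≤ fwCutoff s δ C hs hδ φ :=
  mul_nonneg hs (le_max_right _ _)

lemma fwCutoff_le {s δ : ℝ} {C : Set E} {hs : 0 ≤ s} {hδ : 0 < δ} (φ : E) :
    fwCutoff s δ C hs hδ φ ≤ s := by
  rw [fwCutoff_apply]
  have h0 : 0 ≤ Metric.infDist φ C / δ := div_nonneg Metric.infDist_nonneg hδ.le
  nlinarith [max_le (by linarith : 1 - Metric.infDist φ C / δ ≤ 1) zero_le_one]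

lemma fwCutoff_eq_of_infDist_zero {s δ : ℝ} {C : Set E} {hs : 0 ≤ s} {hδ : 0 < δ} {φ : E}
    (h : Metric.infDist φ C = 0) : fwCutoff s δ C hs hδ φ = s := by
  rw [fwCutoff_apply, h]
  norm_num

lemma fwCutoff_eq_zero {s δ : ℝ} {C : Set E} {hs : 0 ≤ s} {hδ : 0 < δ} {φ : E}
    (h : δ ≤ Metric.infDist φ C) : fwCutoff s δ C hs hδ φ = 0 := by
  rw [fwCutoff_apply]
  have : 1 - Metric.infDist φ C / δ ≤ 0 := by
    rw [sub_nonpos, le_div_iff₀ hδ]; linarith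
  rw [max_eq_right this, mul_zero]

lemma fwCutoff_lip {s δ : ℝ} {C : Set E} {hs : 0 ≤ s} {hδ : 0 < δ} (φ ψ : E) :
    |fwCutoff s δ C hs hδ φ - fwCutoff s δ C hs hδ ψ| ≤ s / δ * dist φ ψ := by
  rw [fwCutoff_apply, fwCutoff_apply, ← mul_sub, abs_mul, abs_of_nonneg hs]
  have h3 : |Metric.infDist φ C - Metric.infDist ψ C| ≤ dist φ ψ := by
    have := (Metric.lipschitz_infDist_pt C).dist_le_mul φ ψ
    rwa [Real.dist_eq, NNReal.coe_one, one_mul] at this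
  have h1 : |max (1 - Metric.infDist φ C / δ) 0 - max (1 - Metric.infDist ψ C / δ) 0|
      ≤ dist φ ψ / δ := by
    refine (abs_max_sub_max_le_abs _ _ 0).trans ?_
    have he : (1 - Metric.infDist φ C / δ) - (1 - Metric.infDist ψ C / δ)
        = (Metric.infDist ψ C - Metric.infDist φ C) / δ := by ring
    rw [he, abs_div, abs_of_pos hδ, abs_sub_comm]
    gcongr
  calc s * |max (1 - Metric.infDist φ C / δ) 0 - max (1 - Metric.infDist ψ C / δ) 0|
      ≤ s * (dist φ ψ / δ) := mul_le_mul_of_nonneg_left h1 hs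
    _ = s / δ * dist φ ψ := by ring

lemma ereal_le_coe_abs (x : EReal) : x ≤ (x.abs : EReal) := by
  induction x using EReal.rec with
  | bot => exact bot_le
  | coe x => rw [EReal.coe_abs]; exact_mod_cast le_abs_self x
  | top => rw [EReal.abs_top]; exact le_top
end cutoff

/-- With no extra assumptions, the equicontinuous uniform Laplace principle implies
the Freidlin-Wentzell uniform upper bound. -/
theorem eulp_implies_fw_uniform_upper
    {E : Type*} [MetricSpace E] [PolishSpace E] [MeasurableSpace E] [BorelSpace E]
    {E0 : Type*} {Ω : Type*} [MeasurableSpace Ω] (μ : Measure Ω) [IsProbabilityMeasure μ]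
    (X : ℝ → E0 → Ω → E) (hX : ∀ ε x, Measurable (X ε x))
    (a : ℝ → ℝ) (ha_pos : ∀ ε > 0, 0 < a ε)
    (ha : Tendsto a (𝓝[>] (0:ℝ)) (𝓝 0))
    (I : E0 → E → ℝ≥0∞) (hI : ∀ x, LowerSemicontinuous (I x))
    (𝒜 : Set (Set E0))
    -- the equicontinuous uniform Laplace principle over 𝒜
    (hEULP : ∀ A ∈ 𝒜, ∀ L : Set (E →ᵇ ℝ),
      (∃ M : ℝ, ∀ h ∈ L, ‖h‖ ≤ M) →
      (∀ η > (0:ℝ), ∃ δ > (0:ℝ), ∀ h ∈ L, ∀ φ ψ : E, dist φ ψ < δ → |h φ - h ψ| < η) →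
      Tendsto (fun ε => ⨆ x ∈ A, ⨆ h ∈ L,
          EReal.abs (((a ε * Real.log (∫ ω, Real.exp (-(h (X ε x ω)) / a ε) ∂μ) : ℝ) : EReal)
            + ⨅ φ, (((h φ : ℝ) : EReal) + (I x φ : EReal))))
        (𝓝[>] (0:ℝ)) (𝓝 (0 : ℝ≥0∞))) :
    -- the Freidlin-Wentzell uniform upper bound
    ∀ A ∈ 𝒜, ∀ s₀ > (0:ℝ), ∀ δ > (0:ℝ),
      Filter.limsup (fun ε =>
        ⨆ x ∈ A, ⨆ s ∈ Set.Icc (0:ℝ) s₀,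
          ((a ε : EReal) * ENNReal.log
              (μ {ω | ENNReal.ofReal δ ≤
                  EMetric.infEdist (X ε x ω) {φ | I x φ ≤ ENNReal.ofReal s}})
            + (s : EReal))) (𝓝[>] (0:ℝ)) ≤ 0 := by
  intro A hA s₀ hs₀ δ hδ
  -- the family of test functions
  set L : Set (E →ᵇ ℝ) :=
    {h | ∃ s : ℝ, ∃ hs : 0 ≤ s, s ≤ s₀ ∧ ∃ C : Set E, h = fwCutoff s δ C hs hδ} with hLdef
  have hbd : ∃ M : ℝ, ∀ h ∈ L, ‖h‖ ≤ M := by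
    refine ⟨s₀, ?_⟩
    rintro h ⟨s, hs, hss, C, rfl⟩
    exact fwCutoff_norm_le.trans hss
  have heq : ∀ η > (0:ℝ), ∃ δ' > (0:ℝ), ∀ h ∈ L, ∀ φ ψ : E,
      dist φ ψ < δ' → |h φ - h ψ| < η := by
    intro η hη
    have hs1 : (0:ℝ) < s₀ + 1 := by linarith
    refine ⟨η * δ / (s₀ + 1), by positivity, ?_⟩
    rintro h ⟨s, hs, hss, C, rfl⟩ φ ψ hd
    refine lt_of_le_of_lt (fwCutoff_lip φ ψ) ?_
    calc s / δ * dist φ ψ ≤ s₀ / δ * dist φ ψ :=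
          mul_le_mul_of_nonneg_right ((div_le_div_iff_of_pos_right hδ).2 hss) dist_nonneg
      _ < s₀ / δ * (η * δ / (s₀ + 1)) := by
          exact mul_lt_mul_of_pos_left hd (by positivity)
      _ = η * (s₀ / (s₀ + 1)) := by field_simp
      _ ≤ η * 1 := by
          exact mul_le_mul_of_nonneg_left ((div_le_one hs1).2 (by linarith)) hη.le
      _ = η := mul_one η
  have key := hEULP A hA L hbd heq
  -- the main pointwise estimate
  have main : ∀ ε ∈ Set.Ioi (0:ℝ),
      (⨆ x ∈ A, ⨆ s ∈ Set.Icc (0:ℝ) s₀,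
          ((a ε : EReal) * ENNReal.log
              (μ {ω | ENNReal.ofReal δ ≤
                  EMetric.infEdist (X ε x ω) {φ | I x φ ≤ ENNReal.ofReal s}})
            + (s : EReal)))
      ≤ ((⨆ x ∈ A, ⨆ h ∈ L,
          EReal.abs (((a ε * Real.log (∫ ω, Real.exp (-(h (X ε x ω)) / a ε) ∂μ) : ℝ) : EReal)
            + ⨅ φ, (((h φ : ℝ) : EReal) + (I x φ : EReal)))) : ℝ≥0∞) := by
    intro ε hε
    have haε : 0 < a ε := ha_pos ε hε
    refine iSup₂_le fun x hx => iSup₂_le fun s hs => ?_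
    set Cs : Set E := {φ | I x φ ≤ ENNReal.ofReal s} with hCs
    set h : E →ᵇ ℝ := fwCutoff s δ Cs hs.1 hδ with hhdef
    have hhL : h ∈ L := ⟨s, hs.1, hs.2, Cs, rfl⟩
    set Z : EReal :=
      ((a ε * Real.log (∫ ω, Real.exp (-(h (X ε x ω)) / a ε) ∂μ) : ℝ) : EReal)
        + ⨅ φ, (((h φ : ℝ) : EReal) + (I x φ : EReal)) with hZdef
    have hsE : (s : EReal) ≤ ((ENNReal.ofReal s : ℝ≥0∞) : EReal) := by
      rw [EReal.coe_ennreal_ofReal]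
      exact EReal.coe_le_coe_iff.2 (le_max_left s 0)
    have hInf : (s : EReal) ≤ ⨅ φ, (((h φ : ℝ) : EReal) + (I x φ : EReal)) := by
      refine le_iInf fun φ => ?_
      by_cases hφ : I x φ ≤ ENNReal.ofReal s
      · have h1 : h φ = s := fwCutoff_eq_of_infDist_zero (Metric.infDist_zero_of_mem hφ)
        rw [h1]
        calc (s : EReal) = (s : EReal) + 0 := (add_zero _).symm
          _ ≤ (s : EReal) + (I x φ : EReal) :=
            add_le_add le_rfl (EReal.coe_ennreal_nonneg _)
      · have h2 : (s : EReal) ≤ (I x φ : EReal) :=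
          hsE.trans (EReal.coe_ennreal_le_coe_ennreal_iff.2 (not_le.1 hφ).le)
        calc (s : EReal) = 0 + (s : EReal) := (zero_add _).symm
          _ ≤ ((h φ : ℝ) : EReal) + (I x φ : EReal) :=
            add_le_add (by exact_mod_cast fwCutoff_nonneg φ) h2
    have hZ : (a ε : EReal) * ENNReal.log
        (μ {ω | ENNReal.ofReal δ ≤ EMetric.infEdist (X ε x ω) Cs}) + (s : EReal) ≤ Z := by
      have hgmeas : Measurable fun ω => Real.exp (-(h (X ε x ω)) / a ε) :=
        Real.measurable_exp.comp
          (((h.continuous.measurable.comp (hX ε x)).neg).div_const _)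
      have hgle1 : ∀ ω, Real.exp (-(h (X ε x ω)) / a ε) ≤ 1 := by
        intro ω
        refine Real.exp_le_one_iff.2 ?_
        exact div_nonpos_of_nonpos_of_nonneg (neg_nonpos.2 (fwCutoff_nonneg _)) haε.le
      have hgint : Integrable (fun ω => Real.exp (-(h (X ε x ω)) / a ε)) μ := by
        refine Integrable.mono' (integrable_const 1) hgmeas.aestronglyMeasurable
          (Filter.Eventually.of_forall fun ω => ?_)
        rw [Real.norm_eq_abs, abs_of_pos (Real.exp_pos _)]
        exact hgle1 ω
      by_cases hCne : Cs.Nonempty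
      · -- the level set is nonempty
        have hsub : {ω | ENNReal.ofReal δ ≤ EMetric.infEdist (X ε x ω) Cs}
            ⊆ {ω | 1 ≤ Real.exp (-(h (X ε x ω)) / a ε)} := by
          intro ω hω
          have hne : EMetric.infEdist (X ε x ω) Cs ≠ ⊤ := by
            obtain ⟨c, hc⟩ := hCne
            exact (lt_of_le_of_lt (EMetric.infEdist_le_edist_of_mem hc)
              (edist_lt_top _ _)).ne
          have hdd : δ ≤ Metric.infDist (X ε x ω) Cs := by
            rw [Metric.infDist]
            exact (ENNReal.ofReal_le_iff_le_toReal hne).1 hω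
          have h0 : h (X ε x ω) = 0 := fwCutoff_eq_zero hdd
          simp only [Set.mem_setOf_eq, h0, neg_zero, zero_div, Real.exp_zero, le_refl]
        have hple : (μ {ω | ENNReal.ofReal δ ≤ EMetric.infEdist (X ε x ω) Cs}).toReal
            ≤ ∫ ω, Real.exp (-(h (X ε x ω)) / a ε) ∂μ := by
          have hmar := mul_meas_ge_le_integral_of_nonneg
            (ae_of_all μ fun ω => (Real.exp_pos (-(h (X ε x ω)) / a ε)).le) hgint 1
          rw [one_mul] at hmar
          exact le_trans (ENNReal.toReal_mono (measure_ne_top μ _)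
            (measure_mono hsub)) hmar
        rcases eq_or_ne (μ {ω | ENNReal.ofReal δ ≤ EMetric.infEdist (X ε x ω) Cs}) 0
          with hp | hp
        · rw [hp, ENNReal.log_zero, EReal.coe_mul_bot_of_pos (by exact_mod_cast haε),
            EReal.bot_add]
          exact bot_le
        · have hptop : (μ {ω | ENNReal.ofReal δ ≤ EMetric.infEdist (X ε x ω) Cs}) ≠ ⊤ :=
            measure_ne_top μ _
          have hptr : 0 < (μ {ω | ENNReal.ofReal δ ≤
              EMetric.infEdist (X ε x ω) Cs}).toReal := ENNReal.toReal_pos hp hptop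
          rw [ENNReal.log_pos_real hp hptop]
          have hlog : Real.log (μ {ω | ENNReal.ofReal δ ≤
                EMetric.infEdist (X ε x ω) Cs}).toReal
              ≤ Real.log (∫ ω, Real.exp (-(h (X ε x ω)) / a ε) ∂μ) :=
            Real.log_le_log hptr hple
          have hmul : a ε * Real.log (μ {ω | ENNReal.ofReal δ ≤
                EMetric.infEdist (X ε x ω) Cs}).toReal
              ≤ a ε * Real.log (∫ ω, Real.exp (-(h (X ε x ω)) / a ε) ∂μ) :=
            mul_le_mul_of_nonneg_left hlog haε.le
          calc (a ε : EReal) * ((Real.log (μ {ω | ENNReal.ofReal δ ≤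
                EMetric.infEdist (X ε x ω) Cs}).toReal : ℝ) : EReal) + (s : EReal)
              = ((a ε * Real.log (μ {ω | ENNReal.ofReal δ ≤
                EMetric.infEdist (X ε x ω) Cs}).toReal : ℝ) : EReal) + (s : EReal) := by
                rw [EReal.coe_mul]
            _ ≤ Z := add_le_add (EReal.coe_le_coe_iff.2 hmul) hInf
      · -- the level set is empty
        have hCe : Cs = ∅ := Set.not_nonempty_iff_eq_empty.1 hCne
        have hconst : ∀ φ : E, h φ = s := fun φ =>
          fwCutoff_eq_of_infDist_zero (by rw [hCe, Metric.infDist_empty])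
        have hp1 : μ {ω | ENNReal.ofReal δ ≤ EMetric.infEdist (X ε x ω) Cs} = 1 := by
          have huniv : {ω | ENNReal.ofReal δ ≤ EMetric.infEdist (X ε x ω) Cs}
              = Set.univ := by
            ext ω
            simp [hCe, EMetric.infEdist, EMetric.infEdist_empty, le_top]
          rw [huniv, measure_univ]
        have hint : (∫ ω, Real.exp (-(h (X ε x ω)) / a ε) ∂μ) = Real.exp (-s / a ε) := by
          simp only [hconst]
          rw [integral_const, probReal_univ]
          simp
        have hval : a ε * Real.log (∫ ω, Real.exp (-(h (X ε x ω)) / a ε) ∂μ) = -s := by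
          rw [hint, Real.log_exp]
          field_simp
        have hInf2 : ((s + s : ℝ) : EReal)
            ≤ ⨅ φ, (((h φ : ℝ) : EReal) + (I x φ : EReal)) := by
          refine le_iInf fun φ => ?_
          have hφ : ¬ I x φ ≤ ENNReal.ofReal s := by
            intro hc
            exact absurd (hCe ▸ hc : φ ∈ (∅ : Set E)) (Set.notMem_empty φ)
          have h2 : (s : EReal) ≤ (I x φ : EReal) :=
            hsE.trans (EReal.coe_ennreal_le_coe_ennreal_iff.2 (not_le.1 hφ).le)
          rw [EReal.coe_add, hconst φ]
          exact add_le_add le_rfl h2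
        rw [hp1, ENNReal.log_one, mul_zero, zero_add]
        calc (s : EReal) = ((-s : ℝ) : EReal) + ((s + s : ℝ) : EReal) := by
              rw [← EReal.coe_add]; norm_num
          _ ≤ ((-s : ℝ) : EReal) + ⨅ φ, (((h φ : ℝ) : EReal) + (I x φ : EReal)) :=
              add_le_add le_rfl hInf2
          _ = Z := by rw [hZdef, hval]
    refine hZ.trans ((ereal_le_coe_abs Z).trans ?_)
    refine EReal.coe_ennreal_le_coe_ennreal_iff.2 ?_
    refine le_trans (le_biSup (fun h' : E →ᵇ ℝ =>
      EReal.abs (((a ε * Real.log (∫ ω, Real.exp (-(h' (X ε x ω)) / a ε) ∂μ) : ℝ) : EReal)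
        + ⨅ φ, (((h' φ : ℝ) : EReal) + (I x φ : EReal)))) hhL) ?_
    exact le_biSup (fun x' : E0 => ⨆ h' ∈ L,
      EReal.abs (((a ε * Real.log (∫ ω, Real.exp (-(h' (X ε x' ω)) / a ε) ∂μ) : ℝ) : EReal)
        + ⨅ φ, (((h' φ : ℝ) : EReal) + (I x' φ : EReal)))) hx
  -- conclude via the Laplace principle
  refine le_of_forall_gt_imp_ge_of_dense fun c hc => ?_
  induction c using EReal.rec with
  | bot => exact absurd hc (by simp)
  | top =>
    refine Filter.limsup_le_of_le (by isBoundedDefault) ?_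
    exact Filter.Eventually.of_forall fun ε => le_top
  | coe r =>
    have hr : 0 < r := by exact_mod_cast hc
    have hIio : Set.Iio (ENNReal.ofReal r) ∈ 𝓝 (0 : ℝ≥0∞) :=
      Iio_mem_nhds (ENNReal.ofReal_pos.2 hr)
    have hev := key hIio
    refine Filter.limsup_le_of_le (by isBoundedDefault) ?_
    filter_upwards [hev, self_mem_nhdsWithin] with ε h1 h2
    refine (main ε h2).trans ?_
    calc ((⨆ x ∈ A, ⨆ h ∈ L,
          EReal.abs (((a ε * Real.log (∫ ω, Real.exp (-(h (X ε x ω)) / a ε) ∂μ) : ℝ) : EReal)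
            + ⨅ φ, (((h φ : ℝ) : EReal) + (I x φ : EReal)))) : ℝ≥0∞)
        ≤ ((ENNReal.ofReal r : ℝ≥0∞) : EReal) :=
          EReal.coe_ennreal_le_coe_ennreal_iff.2 (le_of_lt h1)
      _ ≤ (r : EReal) := by
          rw [EReal.coe_ennreal_ofReal]
          exact EReal.coe_le_coe_iff.2 (max_le le_rfl hr.le)
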